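/- Let X be a smooth complex algebraic variety and Y₁, Y₂ closed subsets of X with Y₂ ⊆ Y₁. In the homotopy category of bounded complexes of finite correspondences H^b(Cor_ℂ), the morphisms c_{Y₁∖Y₂}(X∖Y₂) → c_{Y₁}X → c_{Y₂}X induced by the inclusions, together with the connecting morphism c_{Y₂}X → c_{Y₁∖Y₂}(X∖Y₂)[1] given on components by −id on [X∖Y₂] and −incl : [X∖Y₁] → [X∖Y₂], form a distinguished triangle. -/

import Mathlib

set_option linter.unusedSectionVars false

/-!
# Statement 1 (Lemma `lemma-distingueshed-triangles` (1))

Let `X` be a smooth complex algebraic variety and `Y₁, Y₂` closed subsets of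
`X` with `Y₂ ⊆ Y₁`.  In the homotopy category of bounded complexes of finite
correspondences `H^b(Cor_ℂ)`, the morphisms
`c_{Y₁∖Y₂}(X∖Y₂) → c_{Y₁}X → c_{Y₂}X` induced by the inclusions, together
with the connecting morphism `c_{Y₂}X → c_{Y₁∖Y₂}(X∖Y₂)[1]` given on
components by `−id` on `[X∖Y₂]` (and `−incl : [X∖Y₁] → [X∖Y₂]` as the
differential of the shifted complex), form a distinguished triangle.

The category `Cor_ℂ` of finite correspondences is not available in Mathlib;
it enters as an abstract additive category `C`, together with the objects
`oX = [X]`, `oU1 = [X∖Y₁]`, `oU2 = [X∖Y₂]` and the morphisms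
`i : [X∖Y₁] → [X∖Y₂]`, `j : [X∖Y₂] → [X]` given by (the graphs of) the open
immersions.  For a morphism `f : A ⟶ B`, `twoComplex f` is the cochain
complex `A → B` with `A` in degree `−1` and `B` in degree `0`; thus
`c_{Y₂}X = twoComplex j`, `c_{Y₁}X = twoComplex (i ≫ j)`, and
`c_{Y₁∖Y₂}(X∖Y₂) = twoComplex i`.  We work in the homotopy category
`HomotopyCategory C (ComplexShape.up ℤ)` with its pretriangulated structure
(our two-term complexes are bounded, so this contains `H^b(Cor_ℂ)` as a full
pretriangulated subcategory).
-/

open CategoryTheory Category Limits Pretriangulated ZeroObject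

universe v u

variable {C : Type u} [Category.{v} C] [Preadditive C] [HasZeroObject C]
  [HasBinaryBiproducts C]

/-- The graded object of the two-term complex: `A` in degree `-1`, `B` in
degree `0`, and `0` elsewhere. -/
noncomputable def twoOb (A B : C) (n : ℤ) : C :=
  if n = -1 then A else if n = 0 then B else 0

/-- The differential of the two-term complex `A → B`. -/
noncomputable def twoD {A B : C} (f : A ⟶ B) :
    ∀ n : ℤ, twoOb A B n ⟶ twoOb A B (n + 1) := fun n =>
  if h : n = -1 then
    eqToHom (by subst h; rfl) ≫ f ≫ eqToHom (by subst h; rfl)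
  else 0

lemma twoSq {A B : C} (f : A ⟶ B) : ∀ n : ℤ, twoD f n ≫ twoD f (n + 1) = 0 := by
  intro n
  by_cases h : n = -1
  · subst h
    have h2 : twoD f ((-1 : ℤ) + 1) = 0 := by
      simp only [twoD]
      rw [dif_neg (by decide)]
    rw [h2, comp_zero]
  · simp only [twoD]
    rw [dif_neg h, zero_comp]

/-- The two-term cochain complex `A → B` concentrated in degrees `-1, 0`;
for `f = ([X∖Y] → [X])` this is the complex `c_Y X`. -/
noncomputable def twoComplex {A B : C} (f : A ⟶ B) : CochainComplex C ℤ :=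
  CochainComplex.of (twoOb A B) (twoD f) (twoSq f)

/-- The components of a morphism of two-term complexes. -/
noncomputable def twoMapF {A B A' B' : C} (gA : A ⟶ A') (gB : B ⟶ B') :
    ∀ n : ℤ, twoOb A B n ⟶ twoOb A' B' n := fun n =>
  if h : n = -1 then eqToHom (by subst h; rfl) ≫ gA ≫ eqToHom (by subst h; rfl)
  else if h0 : n = 0 then
    eqToHom (by subst h0; rfl) ≫ gB ≫ eqToHom (by subst h0; rfl)
  else 0

lemma twoMapComm {A B A' B' : C} (f : A ⟶ B) (f' : A' ⟶ B')
    (gA : A ⟶ A') (gB : B ⟶ B') (w : gA ≫ f' = f ≫ gB) :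
    ∀ n : ℤ, twoMapF gA gB n ≫ twoD f' n = twoD f n ≫ twoMapF gA gB (n + 1) := by
  intro n
  by_cases h : n = -1
  · subst h
    simp only [twoMapF, twoD]
    norm_num
    rw [reassoc_of% w]
  · by_cases h0 : n = 0
    · subst h0
      simp only [twoMapF, twoD]
      norm_num
    · simp only [twoMapF, twoD, dif_neg h, dif_neg h0, zero_comp, comp_zero]

/-- The morphism of two-term complexes induced by a commutative square. -/
noncomputable def twoMap {A B A' B' : C} (f : A ⟶ B) (f' : A' ⟶ B')
    (gA : A ⟶ A') (gB : B ⟶ B') (w : gA ≫ f' = f ≫ gB) :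
    twoComplex f ⟶ twoComplex f' :=
  CochainComplex.ofHom (twoMapF gA gB)
    (by simpa only [twoComplex, CochainComplex.of_d] using twoMapComm f f' gA gB w)

/-- The connecting morphism `c_{Y₂}X ⟶ (c_{Y₁∖Y₂}(X∖Y₂))[1]`, given by
`−𝟙 [X∖Y₂]` in degree `-1` (the differential of the target being
`−incl : [X∖Y₁] → [X∖Y₂]`). -/
noncomputable def connMap {oU1 oU2 oX : C} (i : oU1 ⟶ oU2) (j : oU2 ⟶ oX) :
    twoComplex j ⟶ (twoComplex i)⟦(1 : ℤ)⟧ where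
  f n :=
    if h : n = -1 then
      eqToHom (by subst h; rfl) ≫ (-𝟙 oU2) ≫ eqToHom (by subst h; rfl)
    else 0
  comm' := by
    rintro n m (rfl : n + 1 = m)
    by_cases h : n = -1
    · subst h
      simp [twoComplex, twoD, twoOb, CochainComplex.of]
      simp [CochainComplex.of.d, twoD]
      erw [smul_zero, comp_zero, comp_zero, neg_zero]
    · by_cases h2 : n + 1 = -1
      · simp [twoComplex, twoD, twoOb, CochainComplex.of, h, h2]
        exact zero_comp.trans zero_comp.symm
      · simp [h, h2]
        exact zero_comp.trans comp_zero.symm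

/-! ### Auxiliary development -/

namespace CTriangleAux

open CochainComplex CochainComplex.HomComplex CochainComplex.mappingCone HomologicalComplex

variable {C : Type u} [Category.{v} C] [Preadditive C] [HasZeroObject C]
  [HasBinaryBiproducts C]

lemma isZero_twoOb (A B : C) (n : ℤ) (h1 : n ≠ -1) (h0 : n ≠ 0) :
    IsZero (twoOb A B n) := by
  rw [twoOb, if_neg h1, if_neg h0]
  exact isZero_zero C

lemma isZero_X {A B : C} (f : A ⟶ B) (n : ℤ) (h1 : n ≠ -1) (h0 : n ≠ 0) :
    IsZero ((twoComplex f).X n) := isZero_twoOb A B n h1 h0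

@[simp]
lemma d_eval {A B : C} (f : A ⟶ B) :
    (twoComplex f).d (-1) 0 =
      eqToHom (id rfl : (twoComplex f).X (-1) = A) ≫ f ≫
        eqToHom (id rfl : B = (twoComplex f).X 0) := by
  have h' : (twoComplex f).d (-1) 0 = twoD f (-1) := by
    unfold twoComplex; exact CochainComplex.of_d (twoOb A B) (twoD f) (-1)
  rw [h']
  rw [twoD, dif_pos rfl]
  rfl

@[simp]
lemma d_eval_ne {A B : C} (f : A ⟶ B) (p q : ℤ) (hp : p ≠ -1) :
    (twoComplex f).d p q = 0 := by
  by_cases h : p + 1 = q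
  · subst h
    have h' : (twoComplex f).d p (p + 1) = twoD f p :=
      CochainComplex.of_d (twoOb A B) (twoD f) p
    rw [h']
    rw [twoD, dif_neg hp]
    rfl
  · exact HomologicalComplex.shape _ _ _ h

lemma twoMap_f {A B A' B' : C} (f : A ⟶ B) (f' : A' ⟶ B')
    (gA : A ⟶ A') (gB : B ⟶ B') (w : gA ≫ f' = f ≫ gB) (n : ℤ) :
    (twoMap f f' gA gB w).f n = twoMapF gA gB n := rfl

@[simp]
lemma twoMap_f_m1 {A B A' B' : C} (f : A ⟶ B) (f' : A' ⟶ B')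
    (gA : A ⟶ A') (gB : B ⟶ B') (w : gA ≫ f' = f ≫ gB) :
    (twoMap f f' gA gB w).f (-1) =
      eqToHom (id rfl : (twoComplex f).X (-1) = A) ≫ gA ≫
        eqToHom (id rfl : A' = (twoComplex f').X (-1)) := by
  rw [twoMap_f, twoMapF, dif_pos rfl]
  rfl

@[simp]
lemma twoMap_f_0 {A B A' B' : C} (f : A ⟶ B) (f' : A' ⟶ B')
    (gA : A ⟶ A') (gB : B ⟶ B') (w : gA ≫ f' = f ≫ gB) :
    (twoMap f f' gA gB w).f 0 =
      eqToHom (id rfl : (twoComplex f).X 0 = B) ≫ gB ≫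
        eqToHom (id rfl : B' = (twoComplex f').X 0) := by
  rw [twoMap_f, twoMapF, dif_neg (by norm_num), dif_pos rfl]
  rfl

variable {oU1 oU2 oX : C} (i : oU1 ⟶ oU2) (j : oU2 ⟶ oX)

/-- `φ : c_{Y₁∖Y₂}(X∖Y₂) ⟶ c_{Y₁}X`. -/
noncomputable def phi : twoComplex i ⟶ twoComplex (i ≫ j) :=
  twoMap i (i ≫ j) (𝟙 oU1) j (by simp)

/-- `β : c_{Y₁}X ⟶ c_{Y₂}X`. -/
noncomputable def bet : twoComplex (i ≫ j) ⟶ twoComplex j :=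
  twoMap (i ≫ j) j i (𝟙 oX) (by simp)

/-- The degree `-1` cochain used to define `ψ : mappingCone φ ⟶ c_{Y₂}X`. -/
noncomputable def alphaPsi : Cochain (twoComplex i) (twoComplex j) (-1) :=
  Cochain.mk fun p q _hpq =>
    if hp : p = 0 then
      eqToHom (show (twoComplex i).X p = (twoComplex j).X q by
        obtain rfl := hp
        obtain rfl : q = -1 := by omega
        rfl)
    else 0

@[simp]
lemma alphaPsi_v0 (h : (0 : ℤ) + (-1) = -1) :
    (alphaPsi i j).v 0 (-1) h =
      eqToHom (id rfl : (twoComplex i).X 0 = (twoComplex j).X (-1)) := by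
  rfl

@[simp]
lemma alphaPsi_ne (p q : ℤ) (h : p + (-1) = q) (hp : p ≠ 0) :
    (alphaPsi i j).v p q h = 0 := by
  simp only [alphaPsi, Cochain.mk_v, dif_neg hp]

lemma eqPsi : δ (-1) 0 (alphaPsi i j) = Cochain.ofHom (phi i j ≫ bet i j) := by
  ext p
  by_cases h0 : p = 0
  · subst h0
    rw [δ_v (-1) 0 (by norm_num) _ 0 0 (add_zero 0) (-1) 1 (by norm_num) rfl]
    simp [phi, bet]
  · by_cases h1 : p = -1
    · subst h1
      rw [δ_v (-1) 0 (by norm_num) _ (-1) (-1) (add_zero _) (-2) 0 (by norm_num) rfl]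
      simp [phi, bet]
    · refine (isZero_X i p h1 h0).eq_of_src _ _

/-- `ψ : mappingCone φ ⟶ c_{Y₂}X`. -/
noncomputable def psi : mappingCone (phi i j) ⟶ twoComplex j :=
  desc (phi i j) (alphaPsi i j) (bet i j) (eqPsi i j)

/-- The degree `1` cochain used to define `χ : c_{Y₂}X ⟶ mappingCone φ`. -/
noncomputable def alphaChi : Cochain (twoComplex j) (twoComplex i) 1 :=
  Cochain.mk fun p q _hpq =>
    if hp : p = -1 then
      eqToHom (show (twoComplex j).X p = (twoComplex i).X q by
        obtain rfl := hp
        obtain rfl : q = 0 := by omega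
        rfl)
    else 0

@[simp]
lemma alphaChi_vm1 (h : (-1 : ℤ) + 1 = 0) :
    (alphaChi i j).v (-1) 0 h =
      eqToHom (id rfl : (twoComplex j).X (-1) = (twoComplex i).X 0) := by
  rfl

@[simp]
lemma alphaChi_ne (p q : ℤ) (h : p + 1 = q) (hp : p ≠ -1) :
    (alphaChi i j).v p q h = 0 := by
  simp only [alphaChi, Cochain.mk_v, dif_neg hp]

lemma alphaChi_cocycle : δ 1 2 (alphaChi i j) = 0 := by
  ext p q hpq
  by_cases h1 : p = -1
  · subst h1
    obtain rfl : q = 1 := by omega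
    rw [δ_v 1 2 (by norm_num) _ (-1) 1 (by norm_num) 0 0 (by norm_num) (by norm_num)]
    simp
  · by_cases h2 : p = -2
    · subst h2
      obtain rfl : q = 0 := by omega
      rw [δ_v 1 2 (by norm_num) _ (-2) 0 (by norm_num) (-1) (-1) (by norm_num) (by norm_num)]
      simp
    · by_cases h3 : p = -3
      · subst h3
        refine (isZero_X j (-3) (by norm_num) (by norm_num)).eq_of_src _ _
      · obtain rfl : q = p + 2 := by omega
        refine (isZero_X i (p + 2) (by omega) (by omega)).eq_of_tgt _ _

/-- The `1`-cocycle for `χ`. -/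
noncomputable def chiAlpha : Cocycle (twoComplex j) (twoComplex i) 1 :=
  Cocycle.mk (alphaChi i j) 2 rfl (alphaChi_cocycle i j)

/-- The degree `0` cochain used to define `χ`. -/
noncomputable def betaChi : Cochain (twoComplex j) (twoComplex (i ≫ j)) 0 :=
  Cochain.mk fun p q _hpq =>
    if hp : p = 0 then
      eqToHom (show (twoComplex j).X p = (twoComplex (i ≫ j)).X q by
        obtain rfl := hp
        obtain rfl : q = 0 := by omega
        rfl)
    else 0

@[simp]
lemma betaChi_v0 (h : (0 : ℤ) + 0 = 0) :
    (betaChi i j).v 0 0 h =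
      eqToHom (id rfl : (twoComplex j).X 0 = (twoComplex (i ≫ j)).X 0) := by
  rfl

@[simp]
lemma betaChi_ne (p q : ℤ) (h : p + 0 = q) (hp : p ≠ 0) :
    (betaChi i j).v p q h = 0 := by
  simp only [betaChi, Cochain.mk_v, dif_neg hp]

lemma eqChi : δ 0 1 (betaChi i j) +
    (chiAlpha i j).1.comp (Cochain.ofHom (phi i j)) (add_zero 1) = 0 := by
  ext p q hpq
  by_cases h1 : p = -1
  · subst h1
    obtain rfl : q = 0 := by omega
    rw [Cochain.add_v,
      δ_v 0 1 (by norm_num) _ (-1) 0 (by norm_num) (-1) 0 (by norm_num) (by norm_num)]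
    simp [chiAlpha, phi]
  · by_cases h0 : p = 0
    · subst h0
      obtain rfl : q = 1 := by omega
      rw [Cochain.add_v,
        δ_v 0 1 (by norm_num) _ 0 1 (by norm_num) 0 1 (by norm_num) (by norm_num)]
      simp [chiAlpha]
    · refine (isZero_X j p h1 h0).eq_of_src _ _

/-- `χ : c_{Y₂}X ⟶ mappingCone φ`. -/
noncomputable def chi : twoComplex j ⟶ mappingCone (phi i j) :=
  lift (phi i j) (chiAlpha i j) (betaChi i j) (eqChi i j)

@[simp]
lemma chi_f_m1 : (chi i j).f (-1) =
    eqToHom (id rfl : (twoComplex j).X (-1) = (twoComplex i).X 0) ≫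
      (inl (phi i j)).v 0 (-1) (by norm_num) := by
  rw [chi, lift_f (phi i j) (chiAlpha i j) (betaChi i j) (eqChi i j) (-1) 0 (by norm_num)]
  simp [chiAlpha]

@[simp]
lemma chi_f_0 : (chi i j).f 0 =
    eqToHom (id rfl : (twoComplex j).X 0 = (twoComplex (i ≫ j)).X 0) ≫
      (inr (phi i j)).f 0 := by
  rw [chi, lift_f (phi i j) (chiAlpha i j) (betaChi i j) (eqChi i j) 0 1 (by norm_num)]
  simp [chiAlpha]

lemma chi_psi : chi i j ≫ psi i j = 𝟙 (twoComplex j) := by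
  ext n
  by_cases h1 : n = -1
  · subst h1
    rw [HomologicalComplex.comp_f]
    simp [psi, bet]
  · by_cases h0 : n = 0
    · subst h0
      rw [HomologicalComplex.comp_f]
      simp [psi, bet]
    · exact (isZero_X j n h1 h0).eq_of_src _ _

/-- The homotopy datum for `ψ ≫ χ ∼ 𝟙`. -/
noncomputable def gammaTwo : Cochain (twoComplex (i ≫ j)) (mappingCone (phi i j)) (-1) :=
  Cochain.mk fun p q hpq =>
    if hp : p = -1 then
      -(eqToHom (show (twoComplex (i ≫ j)).X p = (twoComplex i).X (-1) by
          obtain rfl := hp; rfl) ≫ (inl (phi i j)).v (-1) q (by omega))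
    else 0

@[simp]
lemma gammaTwo_vm1 (h : (-1 : ℤ) + (-1) = -2) :
    (gammaTwo i j).v (-1) (-2) h =
      -(eqToHom (id rfl : (twoComplex (i ≫ j)).X (-1) = (twoComplex i).X (-1)) ≫
        (inl (phi i j)).v (-1) (-2) (by norm_num)) := by
  rfl

@[simp]
lemma gammaTwo_ne (p q : ℤ) (h : p + (-1) = q) (hp : p ≠ -1) :
    (gammaTwo i j).v p q h = 0 := by
  simp only [gammaTwo, Cochain.mk_v, dif_neg hp]

noncomputable def homotopyPsiChi :
    Homotopy (psi i j ≫ chi i j) (𝟙 (mappingCone (phi i j))) := by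
  refine descHomotopy (phi i j) _ _ 0 (gammaTwo i j) ?_ ?_
  · ext p q hpq
    by_cases h0 : p = 0
    · subst h0
      obtain rfl : q = -1 := by omega
      simp [psi, bet]
    · by_cases h1 : p = -1
      · subst h1
        obtain rfl : q = -2 := by omega
        simp [psi, bet]
        simp [phi]
        abel
      · refine (isZero_X i p h1 h0).eq_of_src _ _
  · ext p
    by_cases h0 : p = 0
    · subst h0
      rw [Cochain.add_v,
        δ_v (-1) 0 (by norm_num) _ 0 0 (add_zero 0) (-1) 1 (by norm_num) rfl]
      simp [psi, bet]
    · by_cases h1 : p = -1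
      · subst h1
        rw [Cochain.add_v,
          δ_v (-1) 0 (by norm_num) _ (-1) (-1) (add_zero _) (-2) 0 (by norm_num) rfl]
        rw [gammaTwo_vm1, Preadditive.neg_comp, assoc,
          inl_v_d (phi i j) (-1) (-2) 0 (by norm_num) (by norm_num)]
        simp [psi, bet]
        simp [phi]
        abel
      · refine (isZero_X (i ≫ j) p h1 h0).eq_of_src _ _

section Conn

/-- The homotopy datum comparing `ψ ≫ connMap` with the triangle's third map. -/
noncomputable def gammaConn :
    Cochain (twoComplex (i ≫ j)) ((twoComplex i)⟦(1 : ℤ)⟧) (-1) :=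
  Cochain.mk fun p q _hpq =>
    if hp : p = -1 then
      eqToHom (show (twoComplex (i ≫ j)).X p = ((twoComplex i)⟦(1 : ℤ)⟧).X q by
        obtain rfl := hp
        obtain rfl : q = -2 := by omega
        rfl)
    else 0

@[simp]
lemma gammaConn_vm1 (h : (-1 : ℤ) + (-1) = -2) :
    (gammaConn i j).v (-1) (-2) h =
      eqToHom (id rfl :
        (twoComplex (i ≫ j)).X (-1) = ((twoComplex i)⟦(1 : ℤ)⟧).X (-2)) := by
  rfl

@[simp]
lemma gammaConn_ne (p q : ℤ) (h : p + (-1) = q) (hp : p ≠ -1) :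
    (gammaConn i j).v p q h = 0 := by
  simp only [gammaConn, Cochain.mk_v, dif_neg hp]

@[simp]
lemma connMap_f_m1 : (connMap i j).f (-1) =
    -(eqToHom (id rfl :
        (twoComplex j).X (-1) = ((twoComplex i)⟦(1 : ℤ)⟧).X (-1))) := by
  have h : (connMap i j).f (-1) =
      eqToHom (id rfl : (twoComplex j).X (-1) = oU2) ≫ (-𝟙 oU2) ≫
        eqToHom (id rfl : oU2 = ((twoComplex i)⟦(1 : ℤ)⟧).X (-1)) := by
    simp only [connMap]
    rfl
  rw [h]
  simp
  exact congrArg Neg.neg (eqToHom_trans _ _)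

@[simp]
lemma connMap_f_ne (n : ℤ) (h : n ≠ -1) : (connMap i j).f n = 0 := by
  exact dif_neg h

@[simp]
lemma shift_d_eval :
    ((twoComplex i)⟦(1 : ℤ)⟧).d (-2) (-1) =
      -(eqToHom (id rfl : ((twoComplex i)⟦(1 : ℤ)⟧).X (-2) = oU1) ≫ i ≫
        eqToHom (id rfl : oU2 = ((twoComplex i)⟦(1 : ℤ)⟧).X (-1))) := by
  have h : ((twoComplex i)⟦(1 : ℤ)⟧).d (-2) (-1) =
      (1 : ℤ).negOnePow • (twoComplex i).d (-1) 0 :=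
    CochainComplex.shiftFunctor_obj_d' _ _ _ _
  rw [h, d_eval]
  simp
  rfl

@[simp]
lemma shift_d_ne (p q : ℤ) (hp : p ≠ -2) :
    ((twoComplex i)⟦(1 : ℤ)⟧).d p q = 0 := by
  have h : ((twoComplex i)⟦(1 : ℤ)⟧).d p q =
      (1 : ℤ).negOnePow • (twoComplex i).d (p + 1) (q + 1) :=
    CochainComplex.shiftFunctor_obj_d' _ _ _ _
  rw [h, d_eval_ne _ _ _ (by omega), smul_zero]
  rfl

set_option maxHeartbeats 1000000 in
noncomputable def homotopyConn :
    Homotopy (psi i j ≫ connMap i j) ((triangle (phi i j)).mor₃) := by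
  refine descHomotopy (phi i j) _ _ 0 (gammaConn i j) ?_ ?_
  · ext p q hpq
    by_cases h0 : p = 0
    · subst h0
      obtain rfl : q = -1 := by omega
      simp [psi, bet, CochainComplex.shiftFunctorObjXIso, inl_v_triangle_mor₃_f]
      erw [comp_zero, zero_add, Cochain.ofHom_v, inl_v_triangle_mor₃_f]
      exact (Preadditive.comp_neg _ _).trans (congrArg Neg.neg (eqToHom_trans _ _))
    · by_cases h1 : p = -1
      · subst h1
        obtain rfl : q = -2 := by omega
        simp [psi, bet, CochainComplex.shiftFunctorObjXIso, inl_v_triangle_mor₃_f]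
        erw [comp_zero, comp_zero, Cochain.ofHom_v, inl_v_triangle_mor₃_f]
        rw [eq_comm]
        refine add_neg_eq_zero.mpr ?_
        simp only [phi, twoMap_f_m1, id_comp, assoc]
        exact (eqToHom_trans_assoc _ _ _).trans (eqToHom_trans _ _)
      · refine (isZero_X i p h1 h0).eq_of_src _ _
  · ext p
    by_cases h0 : p = 0
    · subst h0
      rw [Cochain.add_v,
        δ_v (-1) 0 (by norm_num) _ 0 0 (add_zero 0) (-1) 1 (by norm_num) rfl]
      exact (isZero_X i 1 (by norm_num) (by norm_num)).eq_of_tgt _ _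
    · by_cases h1 : p = -1
      · subst h1
        rw [Cochain.add_v,
          δ_v (-1) 0 (by norm_num) _ (-1) (-1) (add_zero _) (-2) 0 (by norm_num) rfl]
        simp [psi, bet, inr_f_triangle_mor₃_f]
        erw [inr_triangleδ, HomologicalComplex.zero_f, comp_zero, smul_zero, add_zero, add_zero,
          Preadditive.comp_neg, Preadditive.comp_neg, Preadditive.comp_neg, eqToHom_trans,
          eqToHom_trans_assoc]
      · refine (isZero_X (i ≫ j) p h1 h0).eq_of_src _ _

end Conn

end CTriangleAux

/-- The triangle
`c_{Y₁∖Y₂}(X∖Y₂) → c_{Y₁}X → c_{Y₂}X → c_{Y₁∖Y₂}(X∖Y₂)[1]`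
is distinguished in the homotopy category of complexes of finite
correspondences. -/
theorem c_triangle_distinguished
    -- `[X] `, `[X∖Y₁]`, `[X∖Y₂]` in the category of finite correspondences
    (oX oU1 oU2 : C)
    -- the open immersions `X∖Y₁ ↪ X∖Y₂ ↪ X`, as finite correspondences
    (i : oU1 ⟶ oU2) (j : oU2 ⟶ oX) :
    Pretriangulated.Triangle.mk
      ((HomotopyCategory.quotient C (ComplexShape.up ℤ)).map
        (twoMap i (i ≫ j) (𝟙 oU1) j (by simp)))
      ((HomotopyCategory.quotient C (ComplexShape.up ℤ)).map
        (twoMap (i ≫ j) j i (𝟙 oX) (by simp)))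
      ((HomotopyCategory.quotient C (ComplexShape.up ℤ)).map (connMap i j) ≫
        ((HomotopyCategory.quotient C
          (ComplexShape.up ℤ)).commShiftIso (1 : ℤ)).hom.app (twoComplex i))
      ∈ distTriang (HomotopyCategory C (ComplexShape.up ℤ)) := by
  classical
  let Q := HomotopyCategory.quotient C (ComplexShape.up ℤ)
  -- the third map of our triangle agrees, up to homotopy, with that of the
  -- mapping cone triangle of `φ = CTriangleAux.phi i j`
  have hpsiconn : Q.map (CTriangleAux.psi i j ≫ connMap i j) =
      Q.map ((CochainComplex.mappingCone.triangle (CTriangleAux.phi i j)).mor₃) :=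
    HomotopyCategory.eq_of_homotopy _ _ (CTriangleAux.homotopyConn i j)
  have hpsichi : Q.map (CTriangleAux.psi i j ≫ CTriangleAux.chi i j) =
      Q.map (𝟙 (CochainComplex.mappingCone (CTriangleAux.phi i j))) :=
    HomotopyCategory.eq_of_homotopy _ _ (CTriangleAux.homotopyPsiChi i j)
  -- the isomorphism on third objects
  let iso₃ : Q.obj (CochainComplex.mappingCone (CTriangleAux.phi i j)) ≅
      Q.obj (twoComplex j) :=
    { hom := Q.map (CTriangleAux.psi i j)
      inv := Q.map (CTriangleAux.chi i j)
      hom_inv_id := by rw [← Q.map_comp, hpsichi, Q.map_id]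
      inv_hom_id := by rw [← Q.map_comp, CTriangleAux.chi_psi i j, Q.map_id] }
  refine Pretriangulated.isomorphic_distinguished _
    (HomotopyCategory.mappingCone_triangleh_distinguished (CTriangleAux.phi i j)) _
    (Iso.symm ?_)
  refine Pretriangulated.Triangle.isoMk
    (CochainComplex.mappingCone.triangleh (CTriangleAux.phi i j)) _
    (Iso.refl _) (Iso.refl _) iso₃ ?_ ?_ ?_
  · dsimp [iso₃]
    exact (comp_id _).trans (id_comp _).symm
  · dsimp [iso₃]
    refine Eq.trans ?_ (id_comp _).symm
    refine (Q.map_comp (CochainComplex.mappingCone.inr (CTriangleAux.phi i j))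
      (CTriangleAux.psi i j)).symm.trans ?_
    exact congrArg Q.map (CochainComplex.mappingCone.inr_desc _ _ _ _)
  · dsimp [iso₃]
    refine ((congrArg (_ ≫ ·) (CategoryTheory.Functor.map_id _ _)).trans (comp_id _)).trans ?_
    refine Eq.trans ?_ (assoc _ _ _)
    refine Eq.trans ?_ (congrArg (· ≫ _) (Q.map_comp _ _))
    exact congrArg (· ≫ _) hpsiconn.symm
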